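/- Let M ≥ 1, P > 0, N > 0. The system of equations SIR₁(p) = SIR₂(p) = … = SIR_L(p), where SIR_k(p₁,…,p_L) = p_k/(M·P − M·∑_{j<k} p_j − p_k + N), subject to ∑_{k=1}^L p_k = P and p_k ≥ 0 for all k, has a unique solution. -/

import Mathlib

open Finset

/-- The common ratio of the geometric power split. -/
noncomputable def splitRatio (M L : ℕ) (P N : ℝ) : ℝ :=
  (N / ((M : ℝ) * P + N)) ^ ((L : ℝ)⁻¹)

/-- The unique SIR-balanced power split. -/
noncomputable def splitSol (M L : ℕ) (P N : ℝ) (k : ℕ) : ℝ :=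
  (((M : ℝ) * P + N) / M) * (1 - splitRatio M L P N) * (splitRatio M L P N) ^ (k - 1)

section lemmas

variable (M L : ℕ) (P N : ℝ)

lemma splitRatio_pos (hP : 0 < P) (hN : 0 < N) : 0 < splitRatio M L P N := by
  apply Real.rpow_pos_of_pos
  have : 0 ≤ (M : ℝ) * P := by positivity
  positivity

lemma splitRatio_lt_one (hM : 1 ≤ M) (hL : 1 ≤ L) (hP : 0 < P) (hN : 0 < N) :
    splitRatio M L P N < 1 := by
  have hM' : (1 : ℝ) ≤ M := by exact_mod_cast hM
  have h1 : 0 < (M : ℝ) * P + N := by nlinarith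
  apply Real.rpow_lt_one (by positivity)
  · rw [div_lt_one h1]; nlinarith
  · have hL' : (1 : ℝ) ≤ (L : ℝ) := by exact_mod_cast hL
    positivity

lemma splitRatio_pow (hM : 1 ≤ M) (hL : 1 ≤ L) (hP : 0 < P) (hN : 0 < N) :
    (splitRatio M L P N) ^ L = N / ((M : ℝ) * P + N) := by
  have hM' : (1 : ℝ) ≤ M := by exact_mod_cast hM
  have h1 : 0 ≤ N / ((M : ℝ) * P + N) := by
    apply div_nonneg (le_of_lt hN); nlinarith
  exact Real.rpow_inv_natCast_pow h1 (by omega)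

/-- Geometric partial sums of the solution. -/
lemma splitSol_prefix (m : ℕ) :
    ∑ j ∈ Finset.Ico 1 (m + 1), splitSol M L P N j =
      (((M : ℝ) * P + N) / M) * (1 - (splitRatio M L P N) ^ m) := by
  induction m with
  | zero => simp
  | succ m ih =>
    rw [Finset.sum_Ico_succ_top (by omega), ih]
    simp only [splitSol, Nat.add_sub_cancel]
    ring

end lemmas

set_option maxHeartbeats 1000000 in
theorem stmt12 (M L : ℕ) (P N : ℝ) (hM : 1 ≤ M) (hL : 1 ≤ L)
    (hP : 0 < P) (hN : 0 < N) :
    ∃ p : ℕ → ℝ,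
      ((∀ k ∈ Finset.Icc 1 L, 0 ≤ p k) ∧
       (∑ k ∈ Finset.Icc 1 L, p k = P) ∧
       (∀ k ∈ Finset.Icc 1 L, ∀ k' ∈ Finset.Icc 1 L,
          p k / ((M : ℝ) * P - M * (∑ j ∈ Finset.Ico 1 k, p j) - p k + N) =
          p k' / ((M : ℝ) * P - M * (∑ j ∈ Finset.Ico 1 k', p j) - p k' + N))) ∧
      ∀ q : ℕ → ℝ,
        ((∀ k ∈ Finset.Icc 1 L, 0 ≤ q k) ∧
         (∑ k ∈ Finset.Icc 1 L, q k = P) ∧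
         (∀ k ∈ Finset.Icc 1 L, ∀ k' ∈ Finset.Icc 1 L,
            q k / ((M : ℝ) * P - M * (∑ j ∈ Finset.Ico 1 k, q j) - q k + N) =
            q k' / ((M : ℝ) * P - M * (∑ j ∈ Finset.Ico 1 k', q j) - q k' + N))) →
        ∀ k ∈ Finset.Icc 1 L, q k = p k := by
  have hM' : (1 : ℝ) ≤ M := by exact_mod_cast hM
  have hMpos : (0 : ℝ) < M := by linarith
  obtain ⟨r, hr_def⟩ : ∃ r : ℝ, r = splitRatio M L P N := ⟨_, rfl⟩
  have hr0 : 0 < r := hr_def ▸ splitRatio_pos M L P N hP hN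
  have hr1 : r < 1 := hr_def ▸ splitRatio_lt_one M L P N hM hL hP hN
  have hB : (0 : ℝ) < (M : ℝ) * P + N := by nlinarith
  have hrL : r ^ L = N / ((M : ℝ) * P + N) :=
    hr_def ▸ splitRatio_pow M L P N hM hL hP hN
  obtain ⟨p, hp_def⟩ : ∃ p : ℕ → ℝ, p = splitSol M L P N := ⟨_, rfl⟩
  have hpval : ∀ k, p k = (((M : ℝ) * P + N) / M) * (1 - r) * r ^ (k - 1) := by
    intro k; rw [hp_def, hr_def]; rfl
  have hprefix : ∀ m : ℕ, ∑ j ∈ Finset.Ico 1 (m + 1), p j =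
      (((M : ℝ) * P + N) / M) * (1 - r ^ m) := by
    intro m; rw [hp_def, hr_def]; exact splitSol_prefix M L P N m
  have hIccIco : Finset.Icc 1 L = Finset.Ico 1 (L + 1) := by
    ext x; simp [Nat.lt_succ_iff]
  -- denominators of p
  have hDen : ∀ k, 1 ≤ k →
      (M : ℝ) * P - M * (∑ j ∈ Finset.Ico 1 k, p j) - p k + N =
      (((M : ℝ) * P + N) * r ^ (k - 1)) * (1 - (1 - r) / M) := by
    intro k hk
    obtain ⟨m, rfl⟩ : ∃ m, k = m + 1 := ⟨k - 1, by omega⟩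
    rw [hprefix m, hpval]
    simp only [Nat.add_sub_cancel]
    field_simp
    ring
  have hposfac : 0 < 1 - (1 - r) / (M : ℝ) := by
    have h : (1 - r) / (M : ℝ) < 1 := by
      rw [div_lt_one hMpos]; linarith
    linarith
  -- nonnegativity of p
  have hpnonneg : ∀ k ∈ Finset.Icc 1 L, 0 ≤ p k := by
    intro k _
    rw [hpval]
    have h1 : 0 ≤ (1 : ℝ) - r := by linarith
    positivity
  -- sum of p
  have hpsum : ∑ k ∈ Finset.Icc 1 L, p k = P := by
    rw [hIccIco, hprefix L, hrL]
    field_simp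
    ring
  -- equal SIRs for p
  have hpeq : ∀ k ∈ Finset.Icc 1 L, ∀ k' ∈ Finset.Icc 1 L,
      p k / ((M : ℝ) * P - M * (∑ j ∈ Finset.Ico 1 k, p j) - p k + N) =
      p k' / ((M : ℝ) * P - M * (∑ j ∈ Finset.Ico 1 k', p j) - p k' + N) := by
    have key : ∀ k, 1 ≤ k →
        p k / ((M : ℝ) * P - M * (∑ j ∈ Finset.Ico 1 k, p j) - p k + N) =
        ((1 - r) / M) / (1 - (1 - r) / M) := by
      intro k hk
      rw [hDen k hk, hpval]
      have hbr : ((M : ℝ) * P + N) * r ^ (k - 1) ≠ 0 := by positivity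
      rw [show (((M : ℝ) * P + N) / M) * (1 - r) * r ^ (k - 1) =
          (((M : ℝ) * P + N) * r ^ (k - 1)) * ((1 - r) / M) from by ring]
      rw [mul_div_mul_left _ _ hbr]
    intro k hk k' hk'
    rw [key k (Finset.mem_Icc.mp hk).1, key k' (Finset.mem_Icc.mp hk').1]
  refine ⟨p, ⟨hpnonneg, hpsum, hpeq⟩, ?_⟩
  -- Uniqueness
  rintro q ⟨hq0, hqsum, hqeq⟩
  obtain ⟨Sq, hSq⟩ : ∃ S : ℕ → ℝ, ∀ k, S k = ∑ j ∈ Finset.Ico 1 k, q j :=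
    ⟨_, fun _ => rfl⟩
  have hSqL : Sq (L + 1) = P := by rw [hSq, ← hIccIco]; exact hqsum
  have hSq1 : Sq 1 = 0 := by rw [hSq]; simp
  have hSucc : ∀ k, 1 ≤ k → Sq (k + 1) = Sq k + q k := by
    intro k hk
    rw [hSq, hSq]
    exact Finset.sum_Ico_succ_top hk q
  have hSq_le : ∀ k, k ≤ L + 1 → Sq k ≤ P := by
    intro k hk
    rw [← hSqL, hSq, hSq]
    apply Finset.sum_le_sum_of_subset_of_nonneg
    · exact Finset.Ico_subset_Ico le_rfl (by omega)
    · intro j hj _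
      exact hq0 j (by rw [hIccIco]; exact hj)
  -- denominators bounded below by N
  have hD : ∀ k ∈ Finset.Icc 1 L, N ≤ (M : ℝ) * P - M * Sq k - q k + N := by
    intro k hk
    obtain ⟨hk1, hk2⟩ := Finset.mem_Icc.mp hk
    have hq : 0 ≤ q k := hq0 k hk
    have h1 : q k ≤ (M : ℝ) * q k := le_mul_of_one_le_left hq hM'
    have h2 : Sq (k + 1) ≤ P := hSq_le (k + 1) (by omega)
    have h3 : Sq (k + 1) = Sq k + q k := hSucc k hk1
    nlinarith
  have hDpos : ∀ k ∈ Finset.Icc 1 L, 0 < (M : ℝ) * P - M * Sq k - q k + N := by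
    intro k hk; linarith [hD k hk]
  have h1L : 1 ∈ Finset.Icc 1 L := Finset.mem_Icc.mpr ⟨le_rfl, hL⟩
  obtain ⟨c, hc_def⟩ : ∃ c : ℝ, c = q 1 / ((M : ℝ) * P - M * Sq 1 - q 1 + N) :=
    ⟨_, rfl⟩
  have hqc : ∀ k ∈ Finset.Icc 1 L, q k = c * ((M : ℝ) * P - M * Sq k - q k + N) := by
    intro k hk
    have h := hqeq k hk 1 h1L
    rw [← hSq k, ← hSq 1] at h
    rw [hc_def, ← h]
    exact (div_eq_iff (ne_of_gt (hDpos k hk))).mp rfl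
  have hc_nonneg : 0 ≤ c := by
    rw [hc_def]
    exact div_nonneg (hq0 1 h1L) (le_of_lt (hDpos 1 h1L))
  have hc_pos : 0 < c := by
    rcases lt_or_eq_of_le hc_nonneg with h | h
    · exact h
    · exfalso
      have hz : ∀ k ∈ Finset.Icc 1 L, q k = 0 := by
        intro k hk; rw [hqc k hk, ← h]; ring
      rw [Finset.sum_congr rfl hz, Finset.sum_const, smul_zero] at hqsum
      linarith
  have hc1 : (0 : ℝ) < 1 + c := by linarith
  obtain ⟨T, hT⟩ : ∃ T : ℕ → ℝ, ∀ k, T k = (M : ℝ) * P - M * Sq k + N :=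
    ⟨_, fun _ => rfl⟩
  have hqT : ∀ k ∈ Finset.Icc 1 L, q k = (c / (1 + c)) * T k := by
    intro k hk
    have h := hqc k hk
    rw [hT]
    rw [div_mul_eq_mul_div, eq_div_iff (ne_of_gt hc1)]
    nlinarith [h]
  obtain ⟨s, hs_def⟩ : ∃ s : ℝ, s = 1 - (M : ℝ) * (c / (1 + c)) := ⟨_, rfl⟩
  have hTrec : ∀ k ∈ Finset.Icc 1 L, T (k + 1) = s * T k := by
    intro k hk
    obtain ⟨hk1, _⟩ := Finset.mem_Icc.mp hk
    have h3 : Sq (k + 1) = Sq k + q k := hSucc k hk1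
    have h4 := hqT k hk
    rw [hT, hT, h3, hs_def] at *
    rw [h4]
    ring
  have hT1 : T 1 = (M : ℝ) * P + N := by rw [hT, hSq1]; ring
  have hTval : ∀ m, m ≤ L → T (m + 1) = ((M : ℝ) * P + N) * s ^ m := by
    intro m
    induction m with
    | zero => intro _; simpa using hT1
    | succ m ih =>
      intro hm
      have hmem : m + 1 ∈ Finset.Icc 1 L := Finset.mem_Icc.mpr ⟨by omega, by omega⟩
      rw [hTrec (m + 1) hmem, ih (by omega)]
      ring
  have hTL : T (L + 1) = N := by rw [hT, hSqL]; ring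
  have hsL : ((M : ℝ) * P + N) * s ^ L = N := by rw [← hTval L le_rfl, hTL]
  -- s > 0
  have hs_pos : 0 < s := by
    rcases eq_or_lt_of_le hL with h | h
    · -- L = 1
      subst h
      rw [pow_one] at hsL
      have h1 : s = N / ((M : ℝ) * P + N) := by
        rw [eq_div_iff (ne_of_gt hB)]; linear_combination hsL
      rw [h1]; positivity
    · -- L ≥ 2
      have h2 : (2 : ℕ) ∈ Finset.Icc 1 L := Finset.mem_Icc.mpr ⟨by omega, by omega⟩
      have hT2 : T 2 = s * T 1 := hTrec 1 h1L
      have hT2pos : 0 < T 2 := by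
        have hd := hD 2 h2
        have hq2 := hq0 2 h2
        rw [hT]
        nlinarith
      rw [hT1] at hT2
      by_contra hs
      push_neg at hs
      have : T 2 ≤ 0 := by
        rw [hT2]
        exact mul_nonpos_of_nonpos_of_nonneg hs (le_of_lt hB)
      linarith
  -- s ^ L = r ^ L hence s = r
  have hsr : s = r := by
    have h1 : s ^ L = r ^ L := by
      rw [hrL, eq_div_iff (ne_of_gt hB)]
      linear_combination hsL
    exact (pow_left_inj₀ (le_of_lt hs_pos) (le_of_lt hr0) (by omega)).mp h1
  subst hsr
  -- conclude
  have hcc : c / (1 + c) = (1 - s) / M := by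
    rw [eq_div_iff (ne_of_gt hMpos)]
    have : (M : ℝ) * (c / (1 + c)) = 1 - s := by rw [hs_def]; ring
    linear_combination this
  intro k hk
  obtain ⟨hk1, hk2⟩ := Finset.mem_Icc.mp hk
  obtain ⟨m, rfl⟩ : ∃ m, k = m + 1 := ⟨k - 1, by omega⟩
  rw [hqT (m + 1) hk, hcc, hTval m (by omega), hpval]
  simp only [Nat.add_sub_cancel]
  ring
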